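/- Let n be sufficiently large and suppose 0 ≤ m ≤ n balls are dropped uniformly at random into w ≥ n + √n bins. If m ≥ n^{7/10}, then with probability at least 1 - 1/n², the number of balls not landing alone in a bin (non-singleton balls) is less than (5/4)·m²/n. -/

import Mathlib

open scoped Classical
open Finset

set_option maxHeartbeats 1000000

private lemma Y_le_two_Z
 {m w : ℕ} (f : Fin m → Fin w) :
    (univ.filter (fun i : Fin m =>
        1 < (univ.filter (fun i' : Fin m => f i' = f i)).card)).card ≤
    2 * (univ.filter (fun i : Fin m => ∃ i', i' < i ∧ f i' = f i)).card := by
  classical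
  set A := univ.filter (fun i : Fin m => ∃ i', i' < i ∧ f i' = f i) with hA
  set B := univ.filter (fun i : Fin m =>
      1 < (univ.filter (fun i' : Fin m => f i' = f i)).card) with hB
  have hwit : ∀ i : Fin m, i ∈ B → i ∉ A → ∃ c, f c = f i ∧ i < c := by
    intro i hiB hiA
    have hiA' : ∀ i' : Fin m, i' < i → f i' ≠ f i := by
      intro i' hlt hfe
      exact hiA (by rw [hA, Finset.mem_filter]; exact ⟨Finset.mem_univ _, i', hlt, hfe⟩)
    rw [hB, Finset.mem_filter] at hiB
    obtain ⟨c, hc1, hc2⟩ := (Finset.one_lt_card_iff_nontrivial.mp hiB.2).exists_ne i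
    have hfc : f c = f i := (Finset.mem_filter.mp hc1).2
    rcases lt_or_gt_of_ne hc2 with h | h
    · exact absurd hfc (hiA' c h)
    · exact ⟨c, hfc, h⟩
  have hBsplit : B.card ≤ (B \ A).card + A.card := by
    have h := Finset.card_le_card (s := B) (t := (B \ A) ∪ A) ?_
    · exact h.trans (Finset.card_union_le _ _)
    · intro x hx
      by_cases h : x ∈ A
      · exact Finset.mem_union_right _ h
      · exact Finset.mem_union_left _ (Finset.mem_sdiff.mpr ⟨hx, h⟩)
  have hinj : (B \ A).card ≤ A.card := by
    set g : Fin m → Fin m := fun i =>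
      if h : ∃ c, f c = f i ∧ i < c then h.choose else i with hg
    have hgspec : ∀ i : Fin m, i ∈ B \ A → f (g i) = f i ∧ i < g i := by
      intro i hi
      rw [Finset.mem_sdiff] at hi
      have h2 := hwit i hi.1 hi.2
      rw [hg]; simp only [dif_pos h2]
      exact h2.choose_spec
    apply Finset.card_le_card_of_injOn g
    · intro i hi
      obtain ⟨h1, h2⟩ := hgspec i hi
      rw [Finset.mem_coe, hA, Finset.mem_filter]
      exact ⟨Finset.mem_univ _, i, h2, h1.symm⟩
    · intro i1 hi1 i2 hi2 heq
      rw [Finset.mem_coe] at hi1 hi2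
      obtain ⟨e1, l1⟩ := hgspec i1 hi1
      obtain ⟨e2, l2⟩ := hgspec i2 hi2
      by_contra hne
      have hA1 := (Finset.mem_sdiff.mp hi1).2
      have hA2 := (Finset.mem_sdiff.mp hi2).2
      have hf12 : f i1 = f i2 := by rw [← e1, heq, e2]
      rcases lt_or_gt_of_ne hne with h | h
      · exact hA2 (by rw [hA, Finset.mem_filter]; exact ⟨Finset.mem_univ _, i1, h, hf12⟩)
      · exact hA1 (by rw [hA, Finset.mem_filter]; exact ⟨Finset.mem_univ _, i2, h, hf12.symm⟩)
  omega

private lemma Z_snoc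
 {m w : ℕ} (g : Fin m → Fin w) (x : Fin w) :
    (univ.filter (fun i : Fin (m+1) => ∃ i', i' < i ∧ (Fin.snoc g x : Fin (m+1) → Fin w) i' = (Fin.snoc g x : Fin (m+1) → Fin w) i)).card =
    (univ.filter (fun i : Fin m => ∃ i', i' < i ∧ g i' = g i)).card
      + (if ∃ i : Fin m, g i = x then 1 else 0) := by
  classical
  rw [Finset.card_filter, Finset.card_filter, Fin.sum_univ_castSucc]
  congr 1
  · apply Finset.sum_congr rfl
    intro k _
    refine if_congr ?_ rfl rfl
    constructor
    · rintro ⟨i', hlt, he⟩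
      have hv : (i' : ℕ) < (k : ℕ) := hlt
      have hm : (i' : ℕ) < m := hv.trans k.isLt
      refine ⟨⟨i', hm⟩, hv, ?_⟩
      have h1 : i' = Fin.castSucc ⟨(i' : ℕ), hm⟩ := Fin.ext rfl
      rw [h1, Fin.snoc_castSucc, Fin.snoc_castSucc] at he
      exact he
    · rintro ⟨j, hlt, he⟩
      exact ⟨Fin.castSucc j, by simpa using hlt, by simpa [Fin.snoc_castSucc] using he⟩
  · refine if_congr ?_ rfl rfl
    constructor
    · rintro ⟨i', hlt, he⟩
      have hm : (i' : ℕ) < m := hlt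
      refine ⟨⟨(i' : ℕ), hm⟩, ?_⟩
      have h1 : i' = Fin.castSucc ⟨(i' : ℕ), hm⟩ := Fin.ext rfl
      rw [h1, Fin.snoc_castSucc, Fin.snoc_last] at he
      exact he
    · rintro ⟨i, he⟩
      refine ⟨Fin.castSucc i, ?_, by simp [Fin.snoc_castSucc, Fin.snoc_last, he]⟩
      simpa [Fin.lt_def] using i.isLt

private lemma sum_pow_le (w m : ℕ) :
    ∑ f : Fin m → Fin w, (6/5 : ℝ) ^
      ((univ.filter (fun i : Fin m => ∃ i', i' < i ∧ f i' = f i)).card) ≤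
    ∏ i ∈ Finset.range m, ((w : ℝ) + i / 5) := by
  classical
  induction m with
  | zero => simp [Subsingleton.elim (α := Fin 0 → Fin w)]
  | succ m ih =>
    have hbij : Function.Bijective
        (fun p : (Fin m → Fin w) × Fin w => (Fin.snoc p.1 p.2 : Fin (m+1) → Fin w)) := by
      rw [Function.bijective_iff_has_inverse]
      refine ⟨fun f => (Fin.init f, f (Fin.last m)), ?_, ?_⟩
      · intro ⟨g, x⟩
        simp [Fin.init_snoc, Fin.snoc_last]
      · intro f
        simp [Fin.snoc_init_self]
    have hsum := Fintype.sum_bijective _ hbij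
      (fun p : (Fin m → Fin w) × Fin w => (6/5 : ℝ) ^
        ((univ.filter (fun i : Fin (m+1) => ∃ i', i' < i ∧
            (Fin.snoc p.1 p.2 : Fin (m+1) → Fin w) i' = (Fin.snoc p.1 p.2 : Fin (m+1) → Fin w) i)).card))
      (fun f : Fin (m+1) → Fin w => (6/5 : ℝ) ^
        ((univ.filter (fun i : Fin (m+1) => ∃ i', i' < i ∧ f i' = f i)).card))
      (fun p => rfl)
    rw [← hsum, Fintype.sum_prod_type]
    have hinner : ∀ g : Fin m → Fin w,
        ∑ x : Fin w, (6/5 : ℝ) ^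
          ((univ.filter (fun i : Fin (m+1) => ∃ i', i' < i ∧
              (Fin.snoc g x : Fin (m+1) → Fin w) i' = (Fin.snoc g x : Fin (m+1) → Fin w) i)).card)
        ≤ (6/5 : ℝ) ^
            ((univ.filter (fun i : Fin m => ∃ i', i' < i ∧ g i' = g i)).card)
          * ((w : ℝ) + m / 5) := by
      intro g
      have : ∀ x : Fin w, (6/5 : ℝ) ^
          ((univ.filter (fun i : Fin (m+1) => ∃ i', i' < i ∧
              (Fin.snoc g x : Fin (m+1) → Fin w) i' = (Fin.snoc g x : Fin (m+1) → Fin w) i)).card)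
          = (6/5 : ℝ) ^
            ((univ.filter (fun i : Fin m => ∃ i', i' < i ∧ g i' = g i)).card)
            * (1 + if ∃ i : Fin m, g i = x then (1/5 : ℝ) else 0) := by
        intro x
        rw [Z_snoc]
        by_cases h : ∃ i : Fin m, g i = x <;> simp [h, pow_succ] <;> ring
      rw [Finset.sum_congr rfl (fun x _ => this x), ← Finset.mul_sum]
      have hZnn : (0:ℝ) ≤ (6/5 : ℝ) ^
          ((univ.filter (fun i : Fin m => ∃ i', i' < i ∧ g i' = g i)).card) := by positivity
      apply mul_le_mul_of_nonneg_left _ hZnn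
      rw [Finset.sum_add_distrib]
      simp only [Finset.sum_const, Finset.card_univ, Fintype.card_fin, nsmul_eq_mul, mul_one]
      have : (∑ x : Fin w, if ∃ i : Fin m, g i = x then (1/5:ℝ) else 0)
          = ((univ.filter (fun x : Fin w => ∃ i : Fin m, g i = x)).card : ℝ) * (1/5) := by
        rw [← Finset.sum_filter]
        simp [mul_comm]
      rw [this]
      have hcard : (univ.filter (fun x : Fin w => ∃ i : Fin m, g i = x)).card ≤ m := by
        have hsub : univ.filter (fun x : Fin w => ∃ i : Fin m, g i = x) ⊆
            Finset.image g univ := by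
          intro x hx
          obtain ⟨i, hi⟩ := (Finset.mem_filter.mp hx).2
          exact Finset.mem_image.mpr ⟨i, Finset.mem_univ _, hi⟩
        calc (univ.filter (fun x : Fin w => ∃ i : Fin m, g i = x)).card
            ≤ (Finset.image g univ).card := Finset.card_le_card hsub
          _ ≤ (univ : Finset (Fin m)).card := Finset.card_image_le
          _ = m := by simp
      have : ((univ.filter (fun x : Fin w => ∃ i : Fin m, g i = x)).card : ℝ) ≤ m := by
        exact_mod_cast hcard
      nlinarith
    calc ∑ g : Fin m → Fin w, ∑ x : Fin w, (6/5 : ℝ) ^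
          ((univ.filter (fun i : Fin (m+1) => ∃ i', i' < i ∧
              (Fin.snoc g x : Fin (m+1) → Fin w) i' = (Fin.snoc g x : Fin (m+1) → Fin w) i)).card)
        ≤ ∑ g : Fin m → Fin w, (6/5 : ℝ) ^
            ((univ.filter (fun i : Fin m => ∃ i', i' < i ∧ g i' = g i)).card)
          * ((w : ℝ) + m / 5) := Finset.sum_le_sum (fun g _ => hinner g)
      _ = (∑ g : Fin m → Fin w, (6/5 : ℝ) ^
            ((univ.filter (fun i : Fin m => ∃ i', i' < i ∧ g i' = g i)).card))
          * ((w : ℝ) + m / 5) := by rw [Finset.sum_mul]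
      _ ≤ (∏ i ∈ Finset.range m, ((w : ℝ) + i / 5)) * ((w : ℝ) + m / 5) := by
          apply mul_le_mul_of_nonneg_right ih
          positivity
      _ = ∏ i ∈ Finset.range (m+1), ((w : ℝ) + i / 5) := (Finset.prod_range_succ _ _).symm



private lemma prod_le_exp (w m : ℕ) (hw : 1 ≤ (w:ℝ)) :
    ∏ i ∈ Finset.range m, ((w : ℝ) + i / 5) ≤
      (w:ℝ)^m * Real.exp ((m:ℝ)^2 / (10*w)) := by
  have hwpos : (0:ℝ) < w := lt_of_lt_of_le one_pos hw
  have step : ∀ i ∈ Finset.range m, (w:ℝ) + i/5 ≤ (w:ℝ) * Real.exp ((i:ℝ)/(5*w)) := by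
    intro i _
    have h := Real.add_one_le_exp ((i:ℝ)/(5*w))
    calc (w:ℝ) + i/5 = (w:ℝ) * ((i:ℝ)/(5*w) + 1) := by field_simp; ring
      _ ≤ (w:ℝ) * Real.exp ((i:ℝ)/(5*w)) := by
          apply mul_le_mul_of_nonneg_left h hwpos.le
  calc ∏ i ∈ Finset.range m, ((w : ℝ) + i / 5)
      ≤ ∏ i ∈ Finset.range m, ((w:ℝ) * Real.exp ((i:ℝ)/(5*w))) := by
        apply Finset.prod_le_prod (fun i _ => by positivity) step
    _ = (w:ℝ)^m * Real.exp (∑ i ∈ Finset.range m, (i:ℝ)/(5*w)) := by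
        rw [Finset.prod_mul_distrib, Finset.prod_const, Real.exp_sum]
        simp
    _ ≤ (w:ℝ)^m * Real.exp ((m:ℝ)^2 / (10*w)) := by
        apply mul_le_mul_of_nonneg_left _ (by positivity)
        apply Real.exp_le_exp.mpr
        rw [← Finset.sum_div]
        rw [div_le_div_iff₀ (by positivity) (by positivity)]
        have hs : (∑ i ∈ Finset.range m, (i:ℝ)) * 2 ≤ (m:ℝ)^2 := by
          have := Finset.sum_range_id_mul_two m
          have hcast : (∑ i ∈ Finset.range m, (i:ℝ)) * 2 = ((m:ℕ) * (m-1) : ℕ) := by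
            have h2 := congrArg (Nat.cast : ℕ → ℝ) this
            push_cast at h2
            push_cast
            linarith
          rw [hcast]
          have : ((m * (m-1) : ℕ) : ℝ) ≤ (m:ℝ) * m := by
            calc ((m * (m-1) : ℕ) : ℝ) = (m:ℝ) * ((m-1 : ℕ):ℝ) := by push_cast; ring
              _ ≤ (m:ℝ) * m := by
                  apply mul_le_mul_of_nonneg_left _ (by positivity)
                  exact_mod_cast Nat.sub_le m 1
          nlinarith
        nlinarith [Real.exp_pos ((m:ℝ)^2/(10*w))]

/-- For sufficiently large `n`: drop `m ≤ n` balls uniformly at random into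
`w ≥ n + √n` bins.  If `m ≥ n^{7/10}`, then with probability at least `1 - 1/n²`
the number of balls not landing alone in a bin is less than `(5/4)·m²/n`. -/
theorem remaining_packets_case1 :
    ∃ n₀ : ℕ, ∀ n : ℕ, n₀ ≤ n → ∀ m w : ℕ, m ≤ n →
      (n : ℝ) + Real.sqrt n ≤ w →
      (n : ℝ) ^ ((7 : ℝ) / 10) ≤ m →
      ((Finset.univ.filter (fun f : Fin m → Fin w =>
          ((Finset.univ.filter (fun i : Fin m =>
            1 < (Finset.univ.filter (fun i' : Fin m => f i' = f i)).card)).card : ℝ) <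
            5 / 4 * (m : ℝ) ^ 2 / n)).card : ℝ) / w ^ m ≥
        1 - 1 / (n : ℝ) ^ 2 := by
  use 2400^5
  intro n hn m w hmn hw hm
  have hn1 : (1:ℝ) ≤ n := by
    have h : (1:ℕ) ≤ n := le_trans (by norm_num) hn
    exact_mod_cast h
  have hnpos : (0:ℝ) < n := lt_of_lt_of_le one_pos hn1
  have hnw : (n:ℝ) ≤ w := le_trans (by nlinarith [Real.sqrt_nonneg (n:ℝ)]) hw
  have hw1 : (1:ℝ) ≤ w := le_trans hn1 hnw
  have hwpos : (0:ℝ) < (w:ℝ)^m := by positivity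
  set P : (Fin m → Fin w) → Prop := fun f =>
    ((Finset.univ.filter (fun i : Fin m =>
        1 < (Finset.univ.filter (fun i' : Fin m => f i' = f i)).card)).card : ℝ) <
      5 / 4 * (m : ℝ) ^ 2 / n with hP
  have hsplit := Finset.card_filter_add_card_filter_not
    (s := (univ : Finset (Fin m → Fin w))) (p := P)
  rw [Finset.card_univ, Fintype.card_fun, Fintype.card_fin, Fintype.card_fin] at hsplit
  set bad := univ.filter (fun f : Fin m → Fin w => ¬ P f) with hbaddef
  set good := univ.filter P with hgooddef
  -- the MGF / Markov bound on bad
  set θ : ℝ := 5/8 * (m:ℝ)^2 / n with hθ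
  have hθnn : 0 ≤ θ := by positivity
  set L : ℝ := Real.log (6/5) with hL
  have hL6 : 1/6 ≤ L := by
    have h1 : Real.log (5/6) ≤ 5/6 - 1 := Real.log_le_sub_one_of_pos (by norm_num)
    have h2 : ((6:ℝ)/5) = ((5:ℝ)/6)⁻¹ := by norm_num
    rw [hL, h2, Real.log_inv]
    linarith
  have hbadf : ∀ f ∈ bad, ((6:ℝ)/5) ^ θ ≤ (6/5 : ℝ) ^
      ((univ.filter (fun i : Fin m => ∃ i', i' < i ∧ f i' = f i)).card) := by
    intro f hf
    simp only [hbaddef, hP, Finset.mem_filter, Finset.mem_univ, true_and] at hf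
    push_neg at hf
    have hYZ := Y_le_two_Z f
    have hYZ' : ((univ.filter (fun i : Fin m =>
        1 < (univ.filter (fun i' : Fin m => f i' = f i)).card)).card : ℝ) ≤
        2 * ((univ.filter (fun i : Fin m => ∃ i', i' < i ∧ f i' = f i)).card : ℝ) := by
      exact_mod_cast hYZ
    have hθle : θ ≤ ((univ.filter (fun i : Fin m => ∃ i', i' < i ∧ f i' = f i)).card : ℝ) := by
      have e : θ = (5 / 4 * (m : ℝ) ^ 2 / n) / 2 := by rw [hθ]; ring
      rw [e]
      linarith
    calc ((6:ℝ)/5) ^ θ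
        ≤ ((6:ℝ)/5) ^ (((univ.filter (fun i : Fin m => ∃ i', i' < i ∧ f i' = f i)).card : ℕ) : ℝ) :=
          Real.rpow_le_rpow_of_exponent_le (by norm_num) hθle
      _ = _ := Real.rpow_natCast _ _
  have hmarkov : (bad.card : ℝ) * ((6:ℝ)/5) ^ θ ≤
      (w:ℝ)^m * Real.exp ((m:ℝ)^2/(10*n)) := by
    calc (bad.card : ℝ) * ((6:ℝ)/5) ^ θ
        ≤ ∑ f ∈ bad, (6/5 : ℝ) ^
            ((univ.filter (fun i : Fin m => ∃ i', i' < i ∧ f i' = f i)).card) := by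
          have h := Finset.card_nsmul_le_sum bad _ _ hbadf
          rwa [nsmul_eq_mul] at h
      _ ≤ ∑ f : Fin m → Fin w, (6/5 : ℝ) ^
            ((univ.filter (fun i : Fin m => ∃ i', i' < i ∧ f i' = f i)).card) :=
          Finset.sum_le_sum_of_subset_of_nonneg (Finset.subset_univ _)
            (fun f _ _ => by positivity)
      _ ≤ ∏ i ∈ Finset.range m, ((w : ℝ) + i / 5) := sum_pow_le w m
      _ ≤ (w:ℝ)^m * Real.exp ((m:ℝ)^2 / (10*w)) := prod_le_exp w m hw1
      _ ≤ (w:ℝ)^m * Real.exp ((m:ℝ)^2/(10*n)) := by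
          apply mul_le_mul_of_nonneg_left _ (by positivity)
          apply Real.exp_le_exp.mpr
          apply div_le_div_of_nonneg_left (by positivity) (by positivity)
          linarith
  have hrθ : ((6:ℝ)/5) ^ θ = Real.exp (L * θ) := Real.rpow_def_of_pos (by norm_num) θ
  have hbad : (bad.card : ℝ) ≤ (w:ℝ)^m * Real.exp ((m:ℝ)^2/(10*n) - L * θ) := by
    have hexp : (0:ℝ) < Real.exp (L * θ) := Real.exp_pos _
    rw [hrθ] at hmarkov
    rw [Real.exp_sub, ← mul_div_assoc]
    rw [le_div_iff₀ hexp]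
    exact hmarkov
  -- exponent is very negative
  have hexp1 : (m:ℝ)^2/(10*n) - L * θ ≤ -((m:ℝ)^2/n)/240 := by
    have hu0 : 0 ≤ (m:ℝ)^2/n := by positivity
    have h1 : ((m:ℝ)^2/n) * (1/6) ≤ ((m:ℝ)^2/n) * L := mul_le_mul_of_nonneg_left hL6 hu0
    have e1 : (m:ℝ)^2/(10*(n:ℝ)) = ((m:ℝ)^2/n)/10 := by ring
    have e2 : θ = 5/8*((m:ℝ)^2/n) := by rw [hθ]; ring
    rw [e1, e2]
    linarith
  have hm2 : (n:ℝ)^((2:ℝ)/5) ≤ (m:ℝ)^2/n := by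
    have h1 : ((n:ℝ)^((7:ℝ)/10))^2 ≤ (m:ℝ)^2 := by
      apply pow_le_pow_left₀ (by positivity) hm
    have h2 : ((n:ℝ)^((7:ℝ)/10))^2 = (n:ℝ)^((7:ℝ)/5) := by
      rw [← Real.rpow_natCast ((n:ℝ)^((7:ℝ)/10)) 2, ← Real.rpow_mul hnpos.le]
      norm_num
    rw [le_div_iff₀ hnpos]
    have h3 : (n:ℝ)^((2:ℝ)/5) * n = (n:ℝ)^((7:ℝ)/5) := by
      rw [show (n:ℝ)^((2:ℝ)/5) * n = (n:ℝ)^((2:ℝ)/5) * (n:ℝ)^((1:ℝ)) from by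
        rw [Real.rpow_one], ← Real.rpow_add hnpos]
      norm_num
    rw [h3, ← h2]
    exact h1
  -- 1/n² bound for the exponential
  have h15 : (2400:ℝ) ≤ (n:ℝ)^((1:ℝ)/5) := by
    have hc : ((2400:ℝ))^(5:ℕ) ≤ (n:ℝ) := by exact_mod_cast hn
    have := Real.rpow_le_rpow (by positivity) hc (by norm_num : (0:ℝ) ≤ 1/5)
    rwa [← Real.rpow_natCast (2400:ℝ) 5, ← Real.rpow_mul (by norm_num : (0:ℝ) ≤ 2400),
      show ((5:ℕ):ℝ) * (1/5) = 1 by norm_num, Real.rpow_one] at this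
  have hlog : Real.log n ≤ 5 * (n:ℝ)^((1:ℝ)/5) := by
    have := Real.log_le_rpow_div (le_of_lt hnpos) (by norm_num : (0:ℝ) < 1/5)
    calc Real.log n ≤ (n:ℝ)^((1:ℝ)/5) / (1/5) := by
          simpa using this
      _ = 5 * (n:ℝ)^((1:ℝ)/5) := by ring
  have h25 : (n:ℝ)^((2:ℝ)/5) = (n:ℝ)^((1:ℝ)/5) * (n:ℝ)^((1:ℝ)/5) := by
    rw [← Real.rpow_add hnpos]; norm_num
  have hfinal : Real.exp (-((n:ℝ)^((2:ℝ)/5))/240) ≤ 1/(n:ℝ)^2 := by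
    have hlogineq : 2 * Real.log n ≤ (n:ℝ)^((2:ℝ)/5)/240 := by
      rw [h25]
      nlinarith [Real.rpow_natCast (n:ℝ) 1, hlog, h15,
        Real.rpow_nonneg (le_of_lt hnpos) ((1:ℝ)/5)]
    have h2' : (1:ℝ)/(n:ℝ)^2 = Real.exp (-(2*Real.log n)) := by
      rw [show (2:ℝ)*Real.log n = Real.log ((n:ℝ)^2) from by
        rw [Real.log_pow]; push_cast; ring]
      rw [Real.exp_neg, Real.exp_log (by positivity), one_div]
    rw [h2']
    apply Real.exp_le_exp.mpr
    linarith
  -- combine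
  have hbad2 : (bad.card : ℝ) ≤ (w:ℝ)^m * (1/(n:ℝ)^2) := by
    calc (bad.card : ℝ) ≤ (w:ℝ)^m * Real.exp ((m:ℝ)^2/(10*n) - L * θ) := hbad
      _ ≤ (w:ℝ)^m * Real.exp (-((n:ℝ)^((2:ℝ)/5))/240) := by
          apply mul_le_mul_of_nonneg_left _ (le_of_lt hwpos)
          apply Real.exp_le_exp.mpr
          have : -((m:ℝ)^2/n)/240 ≤ -((n:ℝ)^((2:ℝ)/5))/240 := by linarith
          linarith
      _ ≤ (w:ℝ)^m * (1/(n:ℝ)^2) := mul_le_mul_of_nonneg_left hfinal (le_of_lt hwpos)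
  -- finish
  have hgr : ((good.card : ℝ)) + bad.card = (w:ℝ)^m := by exact_mod_cast hsplit
  rw [ge_iff_le, le_div_iff₀ hwpos]
  have hn2 : (0:ℝ) < (n:ℝ)^2 := by positivity
  have : (1 - 1/(n:ℝ)^2) * (w:ℝ)^m = (w:ℝ)^m - (w:ℝ)^m * (1/(n:ℝ)^2) := by ring
  rw [this]
  linarith
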